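/- For any non-crossing partition pi of {1,...,n} and any 1 ≤ r ≤ n, k ≥ 1, the Kreweras complement of the duplication-insertion I_r^k(pi) equals the interval insertion applied to the Kreweras complement: Kr(I_r^k(pi)) = Ĩ_r^k(Kr(pi)). -/

import Mathlib

open scoped BigOperators Classical

/-- Partitions of `Fin n` (i.e. of `{1,…,n}`). -/
abbrev NCP (n : ℕ) := Finpartition (Finset.univ : Finset (Fin n))

/-- `x` and `y` lie in the same block of `P`. -/
def pRel {n : ℕ} (P : NCP n) (x y : Fin n) : Prop := ∃ t ∈ P.parts, x ∈ t ∧ y ∈ t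

/-- `P` is a non-crossing partition. -/
def IsNonCrossing {n : ℕ} (P : NCP n) : Prop :=
  ∀ a b c d : Fin n, a < b → b < c → c < d → pRel P a c → pRel P b d → pRel P a b

/-- Every block of `P` has exactly `k` elements (`k`-equal). -/
def IsKEqual (k : ℕ) {n : ℕ} (P : NCP n) : Prop := ∀ t ∈ P.parts, t.card = k

/-- Every block of `P` has size divisible by `k` (`k`-divisible). -/
def IsKDivisible (k : ℕ) {n : ℕ} (P : NCP n) : Prop := ∀ t ∈ P.parts, k ∣ t.card

/-- Every block of `P` contains only numbers of one residue class mod `k`. -/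
def IsKPreserving (k : ℕ) {n : ℕ} (P : NCP n) : Prop :=
  ∀ t ∈ P.parts, ∀ x ∈ t, ∀ y ∈ t, (x : ℕ) % k = (y : ℕ) % k

/-- The relation on `{1,…,2n}` obtained by putting `P` on the odd positions and `Q` on
the even positions (0-indexed: `P` on evens, `Q` on odds). -/
def jointRel {n : ℕ} (P Q : NCP n) (x y : Fin (2 * n)) : Prop :=
  ((x : ℕ) % 2 = 0 ∧ (y : ℕ) % 2 = 0 ∧
      pRel P ⟨(x : ℕ) / 2, by have := x.isLt; omega⟩ ⟨(y : ℕ) / 2, by have := y.isLt; omega⟩) ∨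
  ((x : ℕ) % 2 = 1 ∧ (y : ℕ) % 2 = 1 ∧
      pRel Q ⟨(x : ℕ) / 2, by have := x.isLt; omega⟩ ⟨(y : ℕ) / 2, by have := y.isLt; omega⟩)

/-- A symmetric-relation analogue of non-crossing. -/
def RelNonCrossing {m : ℕ} (R : Fin m → Fin m → Prop) : Prop :=
  ∀ a b c d : Fin m, a < b → b < c → c < d → R a c → R b d → R a b

/-- `Q` is the Kreweras complement of `P`: the union `P ∪ Q` (interleaved) is non-crossing and
`Q` is the largest such partition in the reverse refinement order. -/
def IsKr {n : ℕ} (P Q : NCP n) : Prop :=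
  RelNonCrossing (jointRel P Q) ∧ ∀ Q' : NCP n, RelNonCrossing (jointRel P Q') → Q' ≤ Q

/-- Position correspondence for the duplication–insertion operation `I_r^j` (1-indexed `r`):
position `x` of the new partition corresponds to position `a` of the old one. Positions
`r+1,…,r+j-1` (1-indexed) correspond to nothing (they are singletons), and both positions
`r` and `r+j` correspond to the old position `r`. -/
def dRel (j r : ℕ) {n : ℕ} (x : Fin (n + j)) (a : Fin n) : Prop :=
  ((x : ℕ) < r ∧ (a : ℕ) = (x : ℕ)) ∨
  ((x : ℕ) = r - 1 + j ∧ (a : ℕ) = r - 1) ∨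
  (r - 1 + j < (x : ℕ) ∧ (a : ℕ) + j = (x : ℕ))

/-- `P'` is obtained from `P` by the duplication–insertion operation `I_r^j`: the element at
(1-indexed) position `r` is duplicated (positions `r` and `r+j` are joined into the block that
contained `r`) and `j-1` singletons are inserted between them. -/
def IsDupIns {n : ℕ} (j r : ℕ) (P : NCP n) (P' : NCP (n + j)) : Prop :=
  ∀ x y : Fin (n + j), pRel P' x y ↔
    (x = y ∨ ∃ a b : Fin n, dRel j r x a ∧ dRel j r y b ∧ pRel P a b)

/-- Position correspondence for the interval-insertion operation `Ĩ_r^j` (1-indexed `r`):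
the new interval block occupies (1-indexed) positions `r,…,r+j-1`. -/
def iRel (j r : ℕ) {n : ℕ} (x : Fin (n + j)) (a : Fin n) : Prop :=
  ((x : ℕ) < r - 1 ∧ (a : ℕ) = (x : ℕ)) ∨
  (r - 1 + j ≤ (x : ℕ) ∧ (a : ℕ) + j = (x : ℕ))

/-- `P'` is obtained from `P` by the interval-insertion operation `Ĩ_r^j`: a new interval block
of size `j` is inserted between (1-indexed) positions `r-1` and `r`. -/
def IsIntIns {n : ℕ} (j r : ℕ) (P : NCP n) (P' : NCP (n + j)) : Prop :=
  ∀ x y : Fin (n + j), pRel P' x y ↔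
    ((r - 1 ≤ (x : ℕ) ∧ (x : ℕ) < r - 1 + j ∧ r - 1 ≤ (y : ℕ) ∧ (y : ℕ) < r - 1 + j) ∨
      ∃ a b : Fin n, iRel j r x a ∧ iRel j r y b ∧ pRel P a b)

/-- `Kr(I_r^k(P)) = Ĩ_r^k(Kr(P))`: the Kreweras complement of a duplication–insertion is the
interval insertion applied to the Kreweras complement. -/

lemma pRel_refl {n : ℕ} (P : NCP n) (x : Fin n) : pRel P x x := by
  obtain ⟨t, ht, hx⟩ := P.exists_mem (Finset.mem_univ x)
  exact ⟨t, ht, hx, hx⟩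

lemma pRel_symm {n : ℕ} {P : NCP n} {x y : Fin n} (h : pRel P x y) : pRel P y x := by
  obtain ⟨t, ht, hx, hy⟩ := h; exact ⟨t, ht, hy, hx⟩

lemma pRel_congr {n : ℕ} {P : NCP n} {a b a' b' : Fin n} (ha : (a : ℕ) = (a' : ℕ))
    (hb : (b : ℕ) = (b' : ℕ)) (h : pRel P a b) : pRel P a' b' := by
  have ha' : a = a' := Fin.ext ha
  have hb' : b = b' := Fin.ext hb
  subst ha' hb'; exact h

lemma isNonCrossing_of_joint {n : ℕ} {P Q : NCP n} (h : RelNonCrossing (jointRel P Q)) :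
    IsNonCrossing P := by
  intro a b c d hab hbc hcd hac hbd
  have ha := a.isLt; have hb := b.isLt; have hc := c.isLt; have hd := d.isLt
  have hab' : (a:ℕ) < b := hab
  have hbc' : (b:ℕ) < c := hbc
  have hcd' : (c:ℕ) < d := hcd
  have key := h ⟨2*a, by omega⟩ ⟨2*b, by omega⟩ ⟨2*c, by omega⟩ ⟨2*d, by omega⟩
    (by simp only [Fin.mk_lt_mk, Fin.val_mk]; omega) (by simp only [Fin.mk_lt_mk, Fin.val_mk]; omega) (by simp only [Fin.mk_lt_mk, Fin.val_mk]; omega)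
    (Or.inl ⟨by simp only [Fin.val_mk]; omega, by simp only [Fin.val_mk]; omega, pRel_congr (by simp only [Fin.mk_lt_mk, Fin.val_mk]; omega) (by simp only [Fin.mk_lt_mk, Fin.val_mk]; omega) hac⟩)
    (Or.inl ⟨by simp only [Fin.val_mk]; omega, by simp only [Fin.val_mk]; omega, pRel_congr (by simp only [Fin.mk_lt_mk, Fin.val_mk]; omega) (by simp only [Fin.mk_lt_mk, Fin.val_mk]; omega) hbd⟩)
  rcases key with ⟨_, _, hp⟩ | ⟨hp, _⟩
  · exact pRel_congr (by simp only [Fin.mk_lt_mk, Fin.val_mk]; omega) (by simp only [Fin.mk_lt_mk, Fin.val_mk]; omega) hp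
  · simp only [Fin.val_mk] at hp; omega

/-- `(x,y)` (as a Kreweras/gap pair) crosses a block of `P`. -/
def Crosses {n : ℕ} (P : NCP n) (x y : Fin n) : Prop :=
  ∃ a b : Fin n, pRel P a b ∧
    (((a:ℕ) ≤ x ∧ (x:ℕ) < b ∧ (b:ℕ) ≤ y) ∨ ((x:ℕ) < a ∧ (a:ℕ) ≤ y ∧ (y:ℕ) < b))

lemma kr_char {n : ℕ} {P Q : NCP n} (hQ : IsKr P Q) {x y : Fin n} (hxy : (x:ℕ) ≤ (y:ℕ)) :
    pRel Q x y ↔ (x = y ∨ ¬ Crosses P x y) := by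
  have hncP : IsNonCrossing P := isNonCrossing_of_joint hQ.1
  constructor
  · intro h
    by_cases hxy' : x = y
    · exact Or.inl hxy'
    have hlt : (x:ℕ) < y := lt_of_le_of_ne hxy (fun e => hxy' (Fin.ext e))
    right
    rintro ⟨a, b, hab, hpat⟩
    have ha := a.isLt; have hb := b.isLt; have hx := x.isLt; have hy := y.isLt
    rcases hpat with ⟨h1, h2, h3⟩ | ⟨h1, h2, h3⟩
    · -- pattern A : 2a < 2x+1 < 2b < 2y+1
      have key := hQ.1 ⟨2*a, by omega⟩ ⟨2*(x:ℕ)+1, by omega⟩ ⟨2*b, by omega⟩ ⟨2*(y:ℕ)+1, by omega⟩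
        (by simp only [Fin.mk_lt_mk]; omega) (by simp only [Fin.mk_lt_mk]; omega)
        (by simp only [Fin.mk_lt_mk]; omega)
        (Or.inl ⟨by simp only [Fin.val_mk]; omega, by simp only [Fin.val_mk]; omega,
          pRel_congr (by simp only [Fin.val_mk]; omega) (by simp only [Fin.val_mk]; omega) hab⟩)
        (Or.inr ⟨by simp only [Fin.val_mk]; omega, by simp only [Fin.val_mk]; omega,
          pRel_congr (by simp only [Fin.val_mk]; omega) (by simp only [Fin.val_mk]; omega) h⟩)
      rcases key with ⟨hp, hq, _⟩ | ⟨hp, hq, _⟩ <;>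
        simp only [Fin.val_mk] at hp hq <;> omega
    · -- pattern B : 2x+1 < 2a < 2y+1 < 2b
      have key := hQ.1 ⟨2*(x:ℕ)+1, by omega⟩ ⟨2*a, by omega⟩ ⟨2*(y:ℕ)+1, by omega⟩ ⟨2*b, by omega⟩
        (by simp only [Fin.mk_lt_mk]; omega) (by simp only [Fin.mk_lt_mk]; omega)
        (by simp only [Fin.mk_lt_mk]; omega)
        (Or.inr ⟨by simp only [Fin.val_mk]; omega, by simp only [Fin.val_mk]; omega,
          pRel_congr (by simp only [Fin.val_mk]; omega) (by simp only [Fin.val_mk]; omega) h⟩)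
        (Or.inl ⟨by simp only [Fin.val_mk]; omega, by simp only [Fin.val_mk]; omega,
          pRel_congr (by simp only [Fin.val_mk]; omega) (by simp only [Fin.val_mk]; omega) hab⟩)
      rcases key with ⟨hp, hq, _⟩ | ⟨hp, hq, _⟩ <;>
        simp only [Fin.val_mk] at hp hq <;> omega
  · rintro (rfl | hnc)
    · exact pRel_refl Q x
    by_cases hxy' : x = y
    · exact hxy' ▸ pRel_refl Q x
    have hlt : (x:ℕ) < y := lt_of_le_of_ne hxy (fun e => hxy' (Fin.ext e))
    classical
    let s : Setoid (Fin n) :=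
      ⟨fun u v => u = v ∨ (u = x ∧ v = y) ∨ (u = y ∧ v = x), by
        refine ⟨fun u => Or.inl rfl, ?_, ?_⟩
        · rintro u v (rfl | ⟨rfl, rfl⟩ | ⟨rfl, rfl⟩) <;> tauto
        · intro u v w h1 h2
          rcases h1 with h | ⟨h1a, h1b⟩ | ⟨h1a, h1b⟩ <;>
            rcases h2 with h' | ⟨h2a, h2b⟩ | ⟨h2a, h2b⟩ <;> subst_vars <;> tauto⟩
    letI : DecidableRel s.r := fun a b => Classical.propDecidable _
    set Q'' := Finpartition.ofSetoid s with hQ''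
    have hQ''rel : ∀ u v : Fin n, pRel Q'' u v → s.r u v := by
      rintro u v ⟨t, ht, hu, hv⟩
      have heq : Q''.part u = t := Q''.part_eq_of_mem ht hu
      have h2 := Finpartition.mem_part_ofSetoid_iff_rel (s := s) (a := u) (b := v)
      exact h2.mp (by rw [hQ''] at heq; rw [heq]; exact hv)
    have key : RelNonCrossing (jointRel P Q'') := by
      intro a b c d hab hbc hcd hac hbd
      have ha := a.isLt; have hb := b.isLt; have hc := c.isLt; have hd := d.isLt
      have hab' : (a:ℕ) < b := hab
      have hbc' : (b:ℕ) < c := hbc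
      have hcd' : (c:ℕ) < d := hcd
      rcases hac with ⟨ha1, hc1, hac⟩ | ⟨ha1, hc1, hac⟩ <;>
        rcases hbd with ⟨hb1, hd1, hbd⟩ | ⟨hb1, hd1, hbd⟩
      · -- both P : use noncrossing of P
        exact Or.inl ⟨ha1, hb1, hncP _ _ _ _ (by simp only [Fin.mk_lt_mk]; omega)
          (by simp only [Fin.mk_lt_mk]; omega) (by simp only [Fin.mk_lt_mk]; omega) hac hbd⟩
      · -- P pair (a,c), Q'' pair (b,d)
        exfalso
        have hr := hQ''rel _ _ hbd
        rcases hr with he | ⟨h1, h2⟩ | ⟨h1, h2⟩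
        · have := congrArg Fin.val he; simp only [Fin.val_mk] at this; omega
        · have e1 := congrArg Fin.val h1; have e2 := congrArg Fin.val h2
          simp only [Fin.val_mk] at e1 e2
          exact hnc ⟨_, _, hac, Or.inl ⟨by simp only [Fin.val_mk]; omega,
            by simp only [Fin.val_mk]; omega, by simp only [Fin.val_mk]; omega⟩⟩
        · have e1 := congrArg Fin.val h1; have e2 := congrArg Fin.val h2
          simp only [Fin.val_mk] at e1 e2; omega
      · -- Q'' pair (a,c), P pair (b,d)
        exfalso
        have hr := hQ''rel _ _ hac
        rcases hr with he | ⟨h1, h2⟩ | ⟨h1, h2⟩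
        · have := congrArg Fin.val he; simp only [Fin.val_mk] at this; omega
        · have e1 := congrArg Fin.val h1; have e2 := congrArg Fin.val h2
          simp only [Fin.val_mk] at e1 e2
          exact hnc ⟨_, _, hbd, Or.inr ⟨by simp only [Fin.val_mk]; omega,
            by simp only [Fin.val_mk]; omega, by simp only [Fin.val_mk]; omega⟩⟩
        · have e1 := congrArg Fin.val h1; have e2 := congrArg Fin.val h2
          simp only [Fin.val_mk] at e1 e2; omega
      · -- both Q''
        exfalso
        have hr1 := hQ''rel _ _ hac
        have hr2 := hQ''rel _ _ hbd
        rcases hr1 with he | ⟨h1, h2⟩ | ⟨h1, h2⟩ <;>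
          rcases hr2 with he' | ⟨h1', h2'⟩ | ⟨h1', h2'⟩ <;>
          [skip; skip; skip; skip; skip; skip; skip; skip; skip] <;>
          first
          | (have := congrArg Fin.val he; simp only [Fin.val_mk] at this; omega)
          | (have := congrArg Fin.val he'; simp only [Fin.val_mk] at this; omega)
          | (have e1 := congrArg Fin.val h1; have e2 := congrArg Fin.val h2;
             have e1' := congrArg Fin.val h1'; have e2' := congrArg Fin.val h2';
             simp only [Fin.val_mk] at e1 e2 e1' e2'; omega)
    have hle := hQ.2 Q'' key
    have hxy'' : pRel Q'' x y := by
      refine ⟨Q''.part x, Q''.part_mem.mpr (Finset.mem_univ x),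
        Q''.mem_part (Finset.mem_univ x), ?_⟩
      rw [hQ'']
      exact (Finpartition.mem_part_ofSetoid_iff_rel).mpr (Or.inr (Or.inl ⟨rfl, rfl⟩))
    obtain ⟨t, ht, hxt, hyt⟩ := hxy''
    obtain ⟨c, hc, hsub⟩ := hle ht
    exact ⟨c, hc, hsub hxt, hsub hyt⟩

theorem stmt12 (n k r : ℕ) (hk : 1 ≤ k) (hr1 : 1 ≤ r) (hr2 : r ≤ n)
    (P : NCP n) (hP : IsNonCrossing P) (P' : NCP (n + k)) (hP' : IsDupIns k r P P')
    (Q : NCP n) (Q' : NCP (n + k)) (hQ : IsKr P Q) (hQ' : IsKr P' Q') :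
    IsIntIns k r Q Q' := by
  have main : ∀ x y : Fin (n + k), (x : ℕ) ≤ (y : ℕ) → (pRel Q' x y ↔
      ((r - 1 ≤ (x : ℕ) ∧ (x : ℕ) < r - 1 + k ∧ r - 1 ≤ (y : ℕ) ∧ (y : ℕ) < r - 1 + k) ∨
        ∃ a b : Fin n, iRel k r x a ∧ iRel k r y b ∧ pRel Q a b)) := by
    intro x y hxy
    have hx := x.isLt; have hy := y.isLt
    have hdup : pRel P' ⟨r - 1, by omega⟩ ⟨r - 1 + k, by omega⟩ :=
      (hP' _ _).mpr (Or.inr ⟨⟨r - 1, by omega⟩, ⟨r - 1, by omega⟩,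
        Or.inl ⟨by simp only [Fin.val_mk]; omega, rfl⟩,
        Or.inr (Or.inl ⟨rfl, rfl⟩), pRel_refl P _⟩)
    rw [kr_char hQ' hxy]
    by_cases hxin : r - 1 ≤ (x : ℕ) ∧ (x : ℕ) < r - 1 + k <;>
      by_cases hyin : r - 1 ≤ (y : ℕ) ∧ (y : ℕ) < r - 1 + k
    · -- Case 1 : both inside
      constructor
      · intro _
        exact Or.inl ⟨hxin.1, hxin.2, hyin.1, hyin.2⟩
      · intro _
        right
        rintro ⟨u, v, huv, hpat⟩
        have hu := u.isLt; have hv := v.isLt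
        rcases (hP' u v).mp huv with he | ⟨u', v', hdu, hdv, _⟩
        · have := congrArg Fin.val he; omega
        · have hu' := u'.isLt; have hv' := v'.isLt
          simp only [dRel] at hdu hdv
          omega
    · -- Case 2 : x inside, y outside (hence y ≥ r-1+k)
      have hyout : r - 1 + k ≤ (y : ℕ) := by omega
      constructor
      · rintro (he | hcr)
        · exfalso; have := congrArg Fin.val he; omega
        · exact (hcr ⟨_, _, hdup, Or.inl ⟨by simp only [Fin.val_mk]; omega,
            by simp only [Fin.val_mk]; omega, by simp only [Fin.val_mk]; omega⟩⟩).elim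
      · rintro (hin | ⟨a, b, h1, h2, h3⟩)
        · exfalso; omega
        · exfalso; simp only [iRel] at h1; omega
    · -- Case 3 : x outside (x < r-1), y inside
      have hxout : (x : ℕ) < r - 1 := by omega
      constructor
      · rintro (he | hcr)
        · exfalso; have := congrArg Fin.val he; omega
        · exact (hcr ⟨_, _, hdup, Or.inr ⟨by simp only [Fin.val_mk]; omega,
            by simp only [Fin.val_mk]; omega, by simp only [Fin.val_mk]; omega⟩⟩).elim
      · rintro (hin | ⟨a, b, h1, h2, h3⟩)
        · exfalso; omega
        · exfalso; simp only [iRel] at h2; omega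
    · -- Case 4 : both outside
      have hxout : (x : ℕ) < r - 1 ∨ r - 1 + k ≤ (x : ℕ) := by omega
      have hyout : (y : ℕ) < r - 1 ∨ r - 1 + k ≤ (y : ℕ) := by omega
      obtain ⟨A, hAn, hA⟩ : ∃ A : ℕ, A < n ∧
          ((x : ℕ) < r - 1 ∧ A = (x : ℕ) ∨ r - 1 + k ≤ (x : ℕ) ∧ A + k = (x : ℕ)) := by
        rcases hxout with h | h
        · exact ⟨x, by omega, Or.inl ⟨h, rfl⟩⟩
        · exact ⟨(x : ℕ) - k, by omega, Or.inr ⟨h, by omega⟩⟩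
      obtain ⟨B, hBn, hB⟩ : ∃ B : ℕ, B < n ∧
          ((y : ℕ) < r - 1 ∧ B = (y : ℕ) ∨ r - 1 + k ≤ (y : ℕ) ∧ B + k = (y : ℕ)) := by
        rcases hyout with h | h
        · exact ⟨y, by omega, Or.inl ⟨h, rfl⟩⟩
        · exact ⟨(y : ℕ) - k, by omega, Or.inr ⟨h, by omega⟩⟩
      have hia : iRel k r x ⟨A, hAn⟩ := by simp only [iRel, Fin.val_mk]; omega
      have hib : iRel k r y ⟨B, hBn⟩ := by simp only [iRel, Fin.val_mk]; omega
      have hQab := kr_char hQ (x := ⟨A, hAn⟩) (y := ⟨B, hBn⟩)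
        (by simp only [Fin.val_mk]; omega)
      have heq : x = y ↔ (⟨A, hAn⟩ : Fin n) = ⟨B, hBn⟩ := by
        constructor <;> intro e <;> have h' := congrArg Fin.val e <;>
          exact Fin.ext (by simp only [Fin.val_mk] at h' ⊢; omega)
      have hcrosses : Crosses P' x y ↔ Crosses P ⟨A, hAn⟩ ⟨B, hBn⟩ := by
        constructor
        · rintro ⟨u, v, huv, hpat⟩
          have hu := u.isLt; have hv := v.isLt
          rcases (hP' u v).mp huv with he | ⟨u', v', hdu, hdv, h⟩
          · exfalso; have := congrArg Fin.val he; omega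
          · refine ⟨u', v', h, ?_⟩
            have hu' := u'.isLt; have hv' := v'.isLt
            simp only [dRel] at hdu hdv
            simp only [Fin.val_mk]
            omega
        · rintro ⟨u', v', h, hpat⟩
          have hu' := u'.isLt; have hv' := v'.isLt
          simp only [Fin.val_mk] at hpat
          obtain ⟨U, hU1, hU2⟩ : ∃ U, U < n + k ∧
              ((U < r ∧ (u' : ℕ) = U) ∨ (r - 1 + k < U ∧ (u' : ℕ) + k = U)) := by
            by_cases hc : (u' : ℕ) < r
            · exact ⟨u', by omega, Or.inl ⟨hc, rfl⟩⟩
            · exact ⟨(u' : ℕ) + k, by omega, Or.inr ⟨by omega, rfl⟩⟩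
          obtain ⟨V, hV1, hV2⟩ : ∃ V, V < n + k ∧
              ((V < r ∧ (v' : ℕ) = V) ∨ (r - 1 + k < V ∧ (v' : ℕ) + k = V)) := by
            by_cases hc : (v' : ℕ) < r
            · exact ⟨v', by omega, Or.inl ⟨hc, rfl⟩⟩
            · exact ⟨(v' : ℕ) + k, by omega, Or.inr ⟨by omega, rfl⟩⟩
          refine ⟨⟨U, hU1⟩, ⟨V, hV1⟩, (hP' _ _).mpr (Or.inr ⟨u', v', ?_, ?_, h⟩), ?_⟩
          · simp only [dRel, Fin.val_mk]; omega
          · simp only [dRel, Fin.val_mk]; omega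
          · simp only [Fin.val_mk]; omega
      constructor
      · rintro (he | hcr)
        · exact Or.inr ⟨_, _, hia, hib, hQab.mpr (Or.inl (heq.mp he))⟩
        · exact Or.inr ⟨_, _, hia, hib,
            hQab.mpr (Or.inr (fun c => hcr (hcrosses.mpr c)))⟩
      · rintro (hin | ⟨a', b', h1, h2, h3⟩)
        · exfalso; omega
        · have ea : a' = ⟨A, hAn⟩ := by
            simp only [iRel] at h1
            exact Fin.ext (by simp only [Fin.val_mk]; omega)
          have eb : b' = ⟨B, hBn⟩ := by
            simp only [iRel] at h2
            exact Fin.ext (by simp only [Fin.val_mk]; omega)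
          subst ea eb
          rcases hQab.mp h3 with he | hcr
          · exact Or.inl (heq.mpr he)
          · exact Or.inr (fun c => hcr (hcrosses.mp c))
  intro x y
  rcases le_total (x : ℕ) (y : ℕ) with h | h
  · exact main x y h
  · constructor
    · intro hp
      rcases (main y x h).mp (pRel_symm hp) with ⟨h1, h2, h3, h4⟩ | ⟨a, b, h1, h2, h3⟩
      · exact Or.inl ⟨h3, h4, h1, h2⟩
      · exact Or.inr ⟨b, a, h2, h1, pRel_symm h3⟩
    · rintro (⟨h1, h2, h3, h4⟩ | ⟨a, b, h1, h2, h3⟩)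
      · exact pRel_symm ((main y x h).mpr (Or.inl ⟨h3, h4, h1, h2⟩))
      · exact pRel_symm ((main y x h).mpr (Or.inr ⟨b, a, h2, h1, pRel_symm h3⟩))
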